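/- Let D₁ and D₂ both be global minimizers of J̃ over the convex set K. Then [A, D₁ − D₂] = 0; consequently the gradient ∇J̃(D) = C − (1/2)[[A,D],A] takes the same value H⋆ at D₁ and at D₂, i.e. the gradient of J̃ is constant on the set of minimizers of J̃ over K. -/

import Mathlib

open Matrix Filter Topology

noncomputable section

/-- Commutator of matrices. -/
def commut {M : ℕ} (X Y : Matrix (Fin M) (Fin M) ℝ) : Matrix (Fin M) (Fin M) ℝ :=
  X * Y - Y * X

/-- `K = CH(Gr(m,ℝ^M))`: symmetric `D` with `0 ⪯ D ⪯ I` and `Tr D = m`. -/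
def Kset (M m : ℕ) (D : Matrix (Fin M) (Fin M) ℝ) : Prop :=
  D.PosSemidef ∧ (1 - D).PosSemidef ∧ D.trace = (m : ℝ)

/-- Squared Frobenius norm `‖X‖² = Tr(Xᵀ X)`. -/
def fnormSq {M : ℕ} (X : Matrix (Fin M) (Fin M) ℝ) : ℝ := (Xᵀ * X).trace

/-- The convexified functional `J̃(D) = Tr(CD) + (1/4)‖[A,D]‖²` with `C = B − (1/2)A²`. -/
def Jt {M : ℕ} (A B D : Matrix (Fin M) (Fin M) ℝ) : ℝ :=
  ((B - (1 / 2 : ℝ) • (A * A)) * D).trace + (1 / 4) * fnormSq (commut A D)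

lemma fnormSq_eq_sum {M : ℕ} (X : Matrix (Fin M) (Fin M) ℝ) :
    fnormSq X = ∑ j, ∑ i, (X i j) ^ 2 := by
  simp [fnormSq, Matrix.trace, Matrix.diag, Matrix.mul_apply, Matrix.transpose_apply, sq]

lemma fnormSq_eq_zero {M : ℕ} {X : Matrix (Fin M) (Fin M) ℝ}
    (h : fnormSq X ≤ 0) : X = 0 := by
  rw [fnormSq_eq_sum] at h
  have h' : ∑ j, ∑ i, (X i j) ^ 2 = 0 := le_antisymm h (by positivity)
  ext i j
  have := (Finset.sum_eq_zero_iff_of_nonneg (fun j _ => by positivity)).mp h' j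
    (Finset.mem_univ j)
  have := (Finset.sum_eq_zero_iff_of_nonneg (fun i _ => by positivity)).mp this i
    (Finset.mem_univ i)
  simpa using pow_eq_zero_iff (n := 2) (by norm_num) |>.mp this

lemma psd_half_smul {M : ℕ} {X : Matrix (Fin M) (Fin M) ℝ} (hX : X.PosSemidef) :
    ((1 / 2 : ℝ) • X).PosSemidef := by
  constructor
  · have := hX.1
    simpa [Matrix.IsHermitian, Matrix.conjTranspose_smul] using congrArg ((1/2 : ℝ) • ·) this
  · intro x
    have := hX.2 x
    exact (hX.smul (by norm_num : (0 : ℝ) ≤ 1 / 2)).2 x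

lemma commut_sub_right {M : ℕ} (A X Y : Matrix (Fin M) (Fin M) ℝ) :
    commut A X - commut A Y = commut A (X - Y) := by
  simp only [commut, Matrix.mul_sub, Matrix.sub_mul]
  abel

/-- if `D₁, D₂` are both global minimizers of `J̃` over `K`, then
`[A, D₁ − D₂] = 0`; consequently `∇J̃(D) = C − (1/2)[[A,D],A]` takes the same value at
`D₁` and `D₂`. -/
theorem stmt_5 {M m : ℕ} (hM : 2 ≤ M) (hm1 : 1 ≤ m) (hm2 : m ≤ M - 1)
    (A B : Matrix (Fin M) (Fin M) ℝ) (hA : A.IsSymm) (hApsd : A.PosSemidef)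
    (hB : B.IsSymm) (D₁ D₂ : Matrix (Fin M) (Fin M) ℝ)
    (hD₁ : Kset M m D₁) (hD₂ : Kset M m D₂)
    (hmin₁ : ∀ D : Matrix (Fin M) (Fin M) ℝ, Kset M m D → Jt A B D₁ ≤ Jt A B D)
    (hmin₂ : ∀ D : Matrix (Fin M) (Fin M) ℝ, Kset M m D → Jt A B D₂ ≤ Jt A B D) :
    commut A (D₁ - D₂) = 0 ∧
      (B - (1 / 2 : ℝ) • (A * A)) - (1 / 2 : ℝ) • commut (commut A D₁) A =
        (B - (1 / 2 : ℝ) • (A * A)) - (1 / 2 : ℝ) • commut (commut A D₂) A := by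
  set Dm : Matrix (Fin M) (Fin M) ℝ := (1 / 2 : ℝ) • (D₁ + D₂) with hDm
  -- Dm ∈ K
  have hKm : Kset M m Dm := by
    refine ⟨psd_half_smul (hD₁.1.add hD₂.1), ?_, ?_⟩
    · have h1 : (1 : Matrix (Fin M) (Fin M) ℝ) - Dm
          = (1 / 2 : ℝ) • ((1 - D₁) + (1 - D₂)) := by
        rw [hDm]; module
      rw [h1]
      exact psd_half_smul (hD₁.2.1.add hD₂.2.1)
    · rw [hDm, Matrix.trace_smul, Matrix.trace_add, hD₁.2.2, hD₂.2.2]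
      simp; ring
  -- the two minima agree
  have heq : Jt A B D₁ = Jt A B D₂ := le_antisymm (hmin₁ D₂ hD₂) (hmin₂ D₁ hD₁)
  -- commutator is linear
  have hcmid : commut A Dm = (1 / 2 : ℝ) • (commut A D₁ + commut A D₂) := by
    simp only [commut, hDm, Matrix.mul_smul, Matrix.smul_mul, Matrix.mul_add, Matrix.add_mul,
      smul_sub, smul_add]
    abel
  -- key midpoint identity
  have hkey : Jt A B Dm
      = (Jt A B D₁ + Jt A B D₂) / 2
        - (1 / 16) * fnormSq (commut A (D₁ - D₂)) := by
    have hlin : ((B - (1 / 2 : ℝ) • (A * A)) * Dm).trace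
        = (((B - (1 / 2 : ℝ) • (A * A)) * D₁).trace
          + ((B - (1 / 2 : ℝ) • (A * A)) * D₂).trace) / 2 := by
      rw [hDm, Matrix.mul_smul, Matrix.mul_add, Matrix.trace_smul, Matrix.trace_add]
      simp; ring
    have hquad : fnormSq (commut A Dm)
        = fnormSq (commut A D₁) / 2 + fnormSq (commut A D₂) / 2
          - fnormSq (commut A (D₁ - D₂)) / 4 := by
      rw [hcmid, ← commut_sub_right]
      set X := commut A D₁
      set Y := commut A D₂
      simp only [fnormSq_eq_sum]
      have : ∀ j i : Fin M, ((1 / 2 : ℝ) • (X + Y)) i j ^ 2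
          = X i j ^ 2 / 2 + Y i j ^ 2 / 2 - (X - Y) i j ^ 2 / 4 := by
        intro j i
        simp only [Matrix.smul_apply, Matrix.add_apply, Matrix.sub_apply, smul_eq_mul]
        ring
      simp only [this, Finset.sum_sub_distrib, Finset.sum_add_distrib, ← Finset.sum_div]
    rw [Jt, hlin, hquad, Jt, Jt]
    ring
  have hle : Jt A B D₁ ≤ Jt A B Dm := hmin₁ Dm hKm
  have hf : fnormSq (commut A (D₁ - D₂)) ≤ 0 := by
    rw [hkey, ← heq] at hle
    linarith
  have hc0 : commut A (D₁ - D₂) = 0 := fnormSq_eq_zero hf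
  refine ⟨hc0, ?_⟩
  have : commut (commut A D₁) A - commut (commut A D₂) A = 0 := by
    have h1 : commut (commut A D₁) A - commut (commut A D₂) A
        = commut (commut A (D₁ - D₂)) A := by
      rw [← commut_sub_right A D₁ D₂]
      simp only [commut, Matrix.sub_mul, Matrix.mul_sub]
      abel
    rw [h1, hc0]
    simp [commut]
  have h2 : commut (commut A D₁) A = commut (commut A D₂) A := sub_eq_zero.mp this
  rw [h2]
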